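/- Let f(x,y) = Σ_{i=1}^t b_i x^{β_i} y^{γ_i} be a real polynomial with t nonzero terms, ordered so that γ_1 ≤ γ_2 ≤ ... ≤ γ_t. If V(f(x, x+1)) = 2t - 2, then for every i = 1, ..., t-1 one has β_t < β_i and β_i + γ_i < β_t + γ_t. -/

import Mathlib

open Polynomial

/-- Number of sign changes in the coefficient sequence, disregarding zeros. -/
noncomputable def signVar (p : Polynomial ℝ) : ℕ :=
  let l := (((List.range (p.natDegree + 1)).map fun i => p.coeff i).filter fun a => a ≠ 0)
  (l.zip l.tail).countP fun q => q.1 * q.2 < 0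

/-- Substitution y = x + 1 into a bivariate polynomial. -/
noncomputable def subXX1 (f : MvPolynomial (Fin 2) ℝ) : Polynomial ℝ :=
  MvPolynomial.aeval ![Polynomial.X, Polynomial.X + 1] f

/-- `T3 d h = (x+1)^d * h(-x/(x+1))` as a polynomial. -/
noncomputable def T3 (d : ℕ) (h : Polynomial ℝ) : Polynomial ℝ :=
  ∑ i ∈ Finset.range (d + 1),
    Polynomial.C (h.coeff i) * (-Polynomial.X) ^ i * (Polynomial.X + 1) ^ (d - i)

noncomputable def VI1 (h : Polynomial ℝ) : ℕ := signVar h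
noncomputable def VI2 (h : Polynomial ℝ) : ℕ := signVar (h.comp (-1 - Polynomial.X))
noncomputable def VI3 (h : Polynomial ℝ) : ℕ := signVar (T3 h.natDegree h)

namespace SV

/-- sign changes of a list (no filtering) -/
noncomputable def chg (l : List ℝ) : ℕ := (l.zip l.tail).countP fun q => q.1 * q.2 < 0

/-- sign variation: filter zeros then count changes -/
noncomputable def vr (l : List ℝ) : ℕ := chg (l.filter fun a => a ≠ 0)

@[simp] lemma chg_nil : chg [] = 0 := rfl
@[simp] lemma chg_single (a : ℝ) : chg [a] = 0 := rfl

lemma sign_trans {a b c : ℝ} (hab : 0 < a * b) (hac : a * c < 0) : b * c < 0 := by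
  rcases lt_trichotomy a 0 with h|h|h
  · have hb : b < 0 := by nlinarith
    have hc : 0 < c := by nlinarith
    nlinarith
  · simp [h] at hab
  · have hb : 0 < b := by nlinarith
    have hc : c < 0 := by nlinarith
    nlinarith

lemma sign_trans' {a b c : ℝ} (hab : 0 < a * b) (hbc : b * c < 0) : a * c < 0 :=
  sign_trans (by linarith [mul_comm a b]) hbc

lemma chg_cons_cons (a b : ℝ) (l : List ℝ) :
    chg (a :: b :: l) = (if a * b < 0 then 1 else 0) + chg (b :: l) := by
  simp only [chg, List.zip_cons_cons, List.tail, List.countP_cons]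
  by_cases h : a * b < 0 <;> simp [h] <;> omega

lemma chg_cons_le (a : ℝ) (l : List ℝ) : chg (a :: l) ≤ chg l + 1 := by
  cases l with
  | nil => simp
  | cons b l => rw [chg_cons_cons]; split <;> omega

lemma le_chg_cons (a : ℝ) (l : List ℝ) : chg l ≤ chg (a :: l) := by
  cases l with
  | nil => simp
  | cons b l => rw [chg_cons_cons]; omega

lemma chg_cons_sign {a b : ℝ} (h : 0 < a * b) (l : List ℝ) : chg (a :: l) = chg (b :: l) := by
  cases l with
  | nil => simp
  | cons c l =>
    rw [chg_cons_cons, chg_cons_cons]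
    have : a * c < 0 ↔ b * c < 0 := by
      constructor
      · exact fun h' => sign_trans h h'
      · exact fun h' => sign_trans (by linarith [mul_comm a b]) h'
    simp [this]

lemma chg_append_cons (a : ℝ) (r : List ℝ) :
    ∀ l : List ℝ, chg (l ++ a :: r) = chg (l ++ [a]) + chg (a :: r)
  | [] => by simp
  | [x] => by
    simp only [List.cons_append, List.nil_append, chg_cons_cons, chg_single]
    omega
  | x :: y :: l => by
    have ih := chg_append_cons a r (y :: l)
    simp only [List.cons_append, chg_cons_cons] at *
    omega

lemma chg_append_ge (A B : List ℝ) : chg A + chg B ≤ chg (A ++ B) := by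
  cases B with
  | nil => simp
  | cons b B =>
    rw [chg_append_cons]
    have h1 : ∀ A : List ℝ, chg A ≤ chg (A ++ [b]) := by
      intro A
      induction A with
      | nil => simp
      | cons x A ih =>
        cases A with
        | nil => simpa using le_chg_cons x [b]
        | cons y A =>
          simp only [List.cons_append, chg_cons_cons] at *
          omega
    have := h1 A
    omega

lemma chg_append_single_le (A : List ℝ) (b : ℝ) : chg (A ++ [b]) ≤ chg A + 1 := by
  induction A with
  | nil => simp
  | cons x A ih =>
    cases A with
    | nil => simpa using chg_cons_le x [b]
    | cons y A =>
      simp only [List.cons_append, chg_cons_cons] at *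
      omega

lemma chg_append_le (A B : List ℝ) : chg (A ++ B) ≤ chg A + chg B + 1 := by
  cases B with
  | nil => simp
  | cons b B =>
    rw [chg_append_cons]
    have := chg_append_single_le A b
    omega

lemma chg_same_sign {s : ℝ} : ∀ {l : List ℝ}, (∀ x ∈ l, 0 < x * s) → chg l = 0
  | [], _ => rfl
  | [a], _ => rfl
  | a :: b :: l, h => by
    rw [chg_cons_cons]
    have ha := h a (by simp)
    have hb := h b (by simp)
    have : ¬ a * b < 0 := by
      intro hab
      have h2 := sign_trans ha hab
      linarith [mul_comm s b]
    rw [if_neg this, chg_same_sign (fun x hx => h x (by simp [hx]))]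

lemma chg_sign_append_single {s b : ℝ} : ∀ {l : List ℝ}, (∀ x ∈ l, 0 < x * s) → l ≠ [] →
    b * s < 0 → chg (l ++ [b]) = 1
  | [], _, hne, _ => absurd rfl hne
  | [a], h, _, hbs => by
    have ha := h a (by simp)
    have : a * b < 0 := by
      have := sign_trans' (a := a) (b := s) (c := b) (by linarith [mul_comm a s]) (by linarith [mul_comm b s])
      exact this
    simp [chg_cons_cons, this]
  | a :: c :: l, h, _, hbs => by
    have ha := h a (by simp)
    have hc := h c (by simp)
    have hnac : ¬ a * c < 0 := by
      intro hab
      have h2 := sign_trans ha hab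
      linarith [mul_comm s c]
    have ih := chg_sign_append_single (s := s) (b := b) (l := c :: l)
      (fun x hx => h x (by simp [hx])) (by simp) hbs
    simp only [List.cons_append, chg_cons_cons, if_neg hnac] at *
    omega

end SV

namespace SV

lemma sign_neg_neg {a b c : ℝ} (h1 : a * c < 0) (h2 : b * c < 0) : 0 < a * b := by
  rcases lt_trichotomy c 0 with h|h|h
  · have ha : 0 < a := by nlinarith
    have hb : 0 < b := by nlinarith
    nlinarith
  · simp [h] at h1
  · have ha : a < 0 := by nlinarith
    have hb : b < 0 := by nlinarith
    nlinarith

@[simp] lemma vr_nil : vr [] = 0 := rfl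

lemma vr_cons_zero (l : List ℝ) : vr ((0:ℝ) :: l) = vr l := by
  simp [vr, List.filter_cons]

lemma filter_ne_nil_of_mem {l : List ℝ} {x : ℝ} (hx : x ∈ l) (hx0 : x ≠ 0) :
    l.filter (fun a => a ≠ 0) ≠ [] := by
  intro h
  have h2 : x ∈ l.filter (fun a => a ≠ 0) := List.mem_filter.2 ⟨hx, by simpa using hx0⟩
  rw [h] at h2
  exact List.not_mem_nil h2

lemma filter_cons_of_ne {x : ℝ} (l : List ℝ) (hx : x ≠ 0) :
    (x :: l).filter (fun a => a ≠ 0) = x :: l.filter (fun a => a ≠ 0) := by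
  simp [List.filter_cons, hx]

lemma filter_cons_of_eq (l : List ℝ) :
    ((0:ℝ) :: l).filter (fun a => a ≠ 0) = l.filter (fun a => a ≠ 0) := by
  simp [List.filter_cons]

/-- key middle-element comparison lemmas -/
lemma vr_mid_le_two (L R : List ℝ) (x y : ℝ) :
    vr (L ++ x :: R) ≤ vr (L ++ y :: R) + 2 := by
  simp only [vr, List.filter_append, List.filter_cons]
  set FL := L.filter (fun a => a ≠ 0)
  set FR := R.filter (fun a => a ≠ 0)
  have hup : chg (FL ++ (if (x ≠ 0 : Bool) = true then x :: FR else FR)) ≤ chg FL + chg FR + 2 := by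
    split
    · have h1 := chg_append_le FL (x :: FR)
      have h2 := chg_cons_le x FR
      omega
    · have := chg_append_le FL FR
      omega
  have hdn : chg FL + chg FR ≤ chg (FL ++ (if (y ≠ 0 : Bool) = true then y :: FR else FR)) := by
    split
    · have h1 := chg_append_ge FL (y :: FR)
      have h2 := le_chg_cons y FR
      omega
    · exact chg_append_ge FL FR
  omega

lemma vr_mid_le_one (L R : List ℝ) (x y : ℝ)
    (h : L.filter (fun a => a ≠ 0) = [] ∨ R.filter (fun a => a ≠ 0) = []) :
    vr (L ++ x :: R) ≤ vr (L ++ y :: R) + 1 := by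
  simp only [vr, List.filter_append, List.filter_cons]
  set FL := L.filter (fun a => a ≠ 0) with hFL
  set FR := R.filter (fun a => a ≠ 0) with hFR
  rcases h with h | h
  · rw [h]
    simp only [List.nil_append]
    have hup : chg (if (x ≠ 0 : Bool) = true then x :: FR else FR) ≤ chg FR + 1 := by
      split
      · exact chg_cons_le x FR
      · omega
    have hdn : chg FR ≤ chg (if (y ≠ 0 : Bool) = true then y :: FR else FR) := by
      split
      · exact le_chg_cons y FR
      · omega
    omega
  · rw [h]
    have hup : chg (FL ++ (if (x ≠ 0 : Bool) = true then [x] else [])) ≤ chg FL + 1 := by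
      split
      · exact chg_append_single_le FL x
      · simp
    have hdn : chg FL ≤ chg (FL ++ (if (y ≠ 0 : Bool) = true then [y] else [])) := by
      split
      · have := chg_append_ge FL [y]
        simpa using this
      · simp
    omega

/-- coefficients of (1+x)·c with accumulator -/
noncomputable def cv : ℝ → List ℝ → List ℝ
  | p, [] => [p]
  | p, a :: l => (p + a) :: cv a l

@[simp] lemma cv_nil (p : ℝ) : cv p [] = [p] := rfl
@[simp] lemma cv_cons (p a : ℝ) (l : List ℝ) : cv p (a :: l) = (p + a) :: cv a l := rfl

lemma cv_length (p : ℝ) : ∀ l : List ℝ, (cv p l).length = l.length + 1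
  | [] => rfl
  | a :: l => by simp [cv_length a l]

lemma cv_ne_nil (p : ℝ) (l : List ℝ) : cv p l ≠ [] := by
  cases l <;> simp

lemma cv_getD (p : ℝ) : ∀ (l : List ℝ) (i : ℕ), i ≤ l.length →
    (cv p l).getD i 0 = (if i = 0 then p else l.getD (i-1) 0) + l.getD i 0
  | [], 0, _ => by simp
  | [], i+1, h => by simp at h
  | a :: l, 0, _ => by simp
  | a :: l, i+1, h => by
    have := cv_getD a l i (by simpa using h)
    simp only [cv_cons, List.getD_cons_succ, this]
    cases i with
    | zero => simp
    | succ j => simp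

lemma cv_append (B : List ℝ) : ∀ (A : List ℝ) (p : ℝ) (hA : A ≠ []),
    cv p (A ++ B) = (cv p A).dropLast ++ cv (A.getLast hA) B
  | [], _, hA => absurd rfl hA
  | [a], p, _ => by simp
  | a :: c :: A', p, _ => by
    have ih := cv_append B (c :: A') a (by simp)
    simp only [List.cons_append, cv_cons, List.getLast_cons] at *
    rw [ih]
    rfl

lemma cv_mem_sign {a : ℝ} : ∀ (l : List ℝ) (p : ℝ), 0 ≤ p * a → (∀ x ∈ l, 0 ≤ x * a) →
    ∀ z ∈ cv p l, 0 ≤ z * a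
  | [], p, hp, _ => by simpa using hp
  | x :: l, p, hp, hl => by
    intro z hz
    simp only [cv_cons, List.mem_cons] at hz
    rcases hz with rfl | hz
    · have := hl x (by simp)
      nlinarith
    · exact cv_mem_sign l x (hl x (by simp)) (fun y hy => hl y (by simp [hy])) z hz

/-- the core step bound -/
lemma vr_aux {a b x : ℝ} (ha : a ≠ 0) (hb : b * a < 0) (E T : List ℝ)
    (hE : ∀ y ∈ E, 0 ≤ y * a) : vr (E ++ x :: T) ≤ 1 + vr (b :: T) := by
  have hbne : b ≠ 0 := by rintro rfl; simp at hb
  simp only [vr, List.filter_append]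
  rw [filter_cons_of_ne T hbne]
  have hFEsign : ∀ y ∈ E.filter (fun a => a ≠ 0), 0 < y * a := by
    intro y hy
    have h1 := hE y (List.mem_of_mem_filter hy)
    have h2 : y ≠ 0 := by simpa using List.of_mem_filter hy
    rcases h1.lt_or_eq with h | h
    · exact h
    · exact absurd (mul_eq_zero.1 h.symm) (by simp [h2, ha])
  rcases lt_trichotomy (x * a) 0 with hx | hx | hx
  · have hxne : x ≠ 0 := by rintro rfl; simp at hx
    rw [filter_cons_of_ne T hxne, chg_append_cons]
    have h1 : chg (E.filter (fun a => a ≠ 0) ++ [x]) ≤ 1 := by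
      have h3 := chg_append_single_le (E.filter (fun a => a ≠ 0)) x
      have h4 := chg_same_sign (s := a) hFEsign
      omega
    have h2 : chg (x :: T.filter (fun a => a ≠ 0)) = chg (b :: T.filter (fun a => a ≠ 0)) :=
      chg_cons_sign (sign_neg_neg hx hb) _
    omega
  · have hxz : x = 0 := by
      rcases mul_eq_zero.1 hx with h | h
      · exact h
      · exact absurd h ha
    subst hxz
    rw [filter_cons_of_eq T]
    have h1 := chg_append_le (E.filter (fun a => a ≠ 0)) (T.filter (fun a => a ≠ 0))
    have h2 := chg_same_sign (s := a) hFEsign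
    have h3 := le_chg_cons b (T.filter (fun a => a ≠ 0))
    omega
  · have hxne : x ≠ 0 := by rintro rfl; simp at hx
    rw [filter_cons_of_ne T hxne, chg_append_cons]
    have h1 : chg (E.filter (fun a => a ≠ 0) ++ [x]) = 0 := by
      apply chg_same_sign (s := a)
      intro y hy
      rcases List.mem_append.1 hy with h | h
      · exact hFEsign y h
      · simp only [List.mem_singleton] at h; subst h; exact hx
    have h2 := chg_cons_le x (T.filter (fun a => a ≠ 0))
    have h3 := le_chg_cons b (T.filter (fun a => a ≠ 0))
    omega

/-- multiplying by (1+x) does not increase sign variation -/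
lemma vr_cv_le : ∀ (n : ℕ) (c : List ℝ), c.length ≤ n → vr (cv 0 c) ≤ vr c
  | 0, [], _ => by simp [vr, chg]
  | 0, a :: c, h => by simp at h
  | n+1, [], _ => by simp [vr, chg]
  | n+1, a :: c', hlen => by
    by_cases ha : a = 0
    · subst ha
      rw [show cv 0 ((0:ℝ) :: c') = 0 :: cv 0 c' by simp]
      rw [vr_cons_zero, vr_cons_zero]
      exact vr_cv_le n c' (by simpa using hlen)
    · set c : List ℝ := a :: c' with hc
      set P : ℝ → Bool := fun x => decide (0 ≤ x * a) with hP
      set A := c.takeWhile P with hA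
      set B := c.dropWhile P with hB
      have hc_eq : A ++ B = c := List.takeWhile_append_dropWhile ..
      have hAne : A ≠ [] := by
        rw [hA, hc, List.takeWhile_cons]
        have : P a = true := by simp only [hP, decide_eq_true_eq]; nlinarith [mul_self_nonneg a]
        simp [this]
      have hAmem : ∀ x ∈ A, 0 ≤ x * a := by
        intro x hx
        have := List.mem_takeWhile_imp (hA ▸ hx)
        simpa [hP] using this
      rcases hBcases : B with _ | ⟨bb, B'⟩
      · -- no sign change at all
        have hcall : ∀ x ∈ c, 0 ≤ x * a := by
          intro x hx
          apply hAmem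
          rw [← hc_eq] at hx
          simpa [hBcases] using hx
        have : vr (cv 0 c) = 0 := by
          apply chg_same_sign (s := a)
          intro y hy
          have hy0 : y ≠ 0 := by simpa using List.of_mem_filter hy
          have hmem : y ∈ cv 0 c := List.mem_of_mem_filter hy
          have h1 : 0 ≤ y * a := cv_mem_sign c 0 (by simp) hcall y hmem
          rcases h1.lt_or_eq with h | h
          · exact h
          · exact absurd (mul_eq_zero.1 h.symm) (by simp [hy0, ha])
        omega
      · -- sign change: split
        have hdw : c.dropWhile P = bb :: B' := by rw [← hB]; exact hBcases
        have hbneg : bb * a < 0 := by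
          have hne : c.dropWhile P ≠ [] := by rw [hdw]; simp
          have h0 := List.head_dropWhile_not P hne
          have hhead : (c.dropWhile P).head hne = bb := by simp [hdw]
          rw [hhead] at h0
          have h2 : ¬ (0 ≤ bb * a) := by simpa [hP] using h0
          linarith [lt_of_not_ge h2]
        have hlast : ∀ (h : A ≠ []), 0 ≤ (A.getLast h) * a :=
          fun h => hAmem _ (List.getLast_mem h)
        -- decompose cv 0 c
        have hdecomp : cv 0 c = (cv 0 A).dropLast ++ (A.getLast hAne + bb) :: cv bb B' := by
          rw [← hc_eq, hBcases, cv_append (bb :: B') A 0 hAne]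
          rfl
        have hEmem : ∀ y ∈ (cv 0 A).dropLast, 0 ≤ y * a := by
          intro y hy
          exact cv_mem_sign A 0 (by simp) hAmem y ((List.dropLast_sublist _).mem hy)
        have step1 : vr (cv 0 c) ≤ 1 + vr (bb :: cv bb B') := by
          rw [hdecomp]
          exact vr_aux ha hbneg _ _ hEmem
        have step2 : vr (bb :: cv bb B') = vr (cv 0 (bb :: B')) := by
          rw [show cv 0 (bb :: B') = (0 + bb) :: cv bb B' from rfl, zero_add]
        have hlenB : (bb :: B').length ≤ n := by
          have h1 : A.length + B.length = c.length := by
            rw [← hc_eq]; simp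
          have h2 : 0 < A.length := List.length_pos_iff.2 hAne
          rw [hBcases] at h1
          simp only [hc, List.length_cons] at h1 hlen ⊢
          omega
        have step3 : vr (cv 0 (bb :: B')) ≤ vr (bb :: B') := vr_cv_le n (bb :: B') hlenB
        -- lower bound on vr c
        have step4 : 1 + vr (bb :: B') ≤ vr c := by
          rw [← hc_eq, hBcases]
          have hbbne : bb ≠ 0 := by rintro rfl; simp at hbneg
          simp only [vr, List.filter_append]
          rw [filter_cons_of_ne B' hbbne]
          set FA := A.filter (fun x => x ≠ 0) with hFA
          set FB := B'.filter (fun x => x ≠ 0) with hFB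
          have hFAsign : ∀ y ∈ FA, 0 < y * a := by
            intro y hy
            have h1 := hAmem y (List.mem_of_mem_filter hy)
            have h2 : y ≠ 0 := by simpa using List.of_mem_filter hy
            rcases h1.lt_or_eq with h | h
            · exact h
            · exact absurd (mul_eq_zero.1 h.symm) (by simp [h2, ha])
          have hFAne : FA ≠ [] := by
            apply filter_ne_nil_of_mem (x := a) _ ha
            rw [hA, hc, List.takeWhile_cons]
            have : P a = true := by simp only [hP, decide_eq_true_eq]; nlinarith [mul_self_nonneg a]
            simp [this]
          rw [chg_append_cons, chg_sign_append_single hFAsign hFAne hbneg]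
        omega

end SV


namespace SV

lemma signVar_eq_vr (p : Polynomial ℝ) {n : ℕ} (h : p.natDegree ≤ n) :
    signVar p = vr ((List.range (n+1)).map p.coeff) := by
  have h0 : signVar p = vr ((List.range (p.natDegree + 1)).map p.coeff) := rfl
  rw [h0]
  unfold vr
  congr 1
  obtain ⟨m, hm⟩ : ∃ m, n + 1 = (p.natDegree + 1) + m := ⟨n - p.natDegree, by omega⟩
  have h2 : ((((List.range m).map fun x => p.natDegree + 1 + x).map p.coeff).filter
      (fun a => a ≠ 0) : List ℝ) = [] := by
    rw [List.filter_eq_nil_iff]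
    intro y hy
    simp only [List.map_map, List.mem_map, Function.comp] at hy
    obtain ⟨x, _, rfl⟩ := hy
    simp only [ne_eq, decide_not, Bool.not_eq_true', decide_eq_false_iff_not, Decidable.not_not]
    exact p.coeff_eq_zero_of_natDegree_lt (by omega)
  conv_rhs => rw [hm, List.range_add, List.map_append, List.filter_append, h2, List.append_nil]

lemma range_map_split (f : ℕ → ℝ) {a n : ℕ} (h : a ≤ n) :
    (List.range (n+1)).map f =
      (List.range a).map f ++ f a :: ((List.range (n - a)).map fun k => f (a + 1 + k)) := by
  rw [show n + 1 = a + ((n - a) + 1) by omega, List.range_add, List.map_append]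
  congr 1
  rw [List.range_succ_eq_map, List.map_cons, List.map_cons, List.map_map, List.map_map]
  have h1 : f (a + 0) = f a := by rw [add_zero]
  have h2 : List.map ((f ∘ fun x => a + x) ∘ Nat.succ) (List.range (n - a))
      = List.map (fun k => f (a + 1 + k)) (List.range (n - a)) := by
    apply List.map_congr_left
    intro k _
    simp only [Function.comp_apply]
    congr 1
    omega
  rw [h1, h2]

lemma coeff_add_single_ne (p : Polynomial ℝ) (c : ℝ) (a k : ℕ) (h : k ≠ a) :
    (p + C c * X^a).coeff k = p.coeff k := by
  simp only [coeff_add, coeff_C_mul, coeff_X_pow, if_neg h, mul_zero, add_zero]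

lemma signVar_add_single (p : Polynomial ℝ) (c : ℝ) (a : ℕ) :
    signVar (p + C c * X^a) ≤ signVar p + 2 ∧
    (((∀ k < a, p.coeff k = 0) ∨ (∀ k, a < k → p.coeff k = 0)) →
      signVar (p + C c * X^a) ≤ signVar p + 1) := by
  set q := p + C c * X ^ a with hq
  set n := max (max p.natDegree q.natDegree) a with hn
  have hpn : p.natDegree ≤ n := le_trans (le_max_left _ _) (le_max_left _ _)
  have hqn : q.natDegree ≤ n := le_trans (le_max_right _ _) (le_max_left _ _)
  have han : a ≤ n := le_max_right _ _
  rw [signVar_eq_vr p hpn, signVar_eq_vr q hqn, range_map_split p.coeff han,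
    range_map_split q.coeff han]
  have hL : (List.range a).map q.coeff = (List.range a).map p.coeff :=
    List.map_congr_left (fun k hk => by
      have : k < a := List.mem_range.1 hk
      exact coeff_add_single_ne p c a k (by omega))
  have hR : ((List.range (n-a)).map fun k => q.coeff (a+1+k)) =
      ((List.range (n-a)).map fun k => p.coeff (a+1+k)) :=
    List.map_congr_left (fun k _ => coeff_add_single_ne p c a _ (by omega))
  rw [hL, hR]
  constructor
  · exact vr_mid_le_two _ _ _ _
  · intro h
    apply vr_mid_le_one
    rcases h with h | h
    · left
      rw [List.filter_eq_nil_iff]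
      intro y hy
      simp only [List.mem_map, List.mem_range] at hy
      obtain ⟨k, hk, rfl⟩ := hy
      simp [h k hk]
    · right
      rw [List.filter_eq_nil_iff]
      intro y hy
      simp only [List.mem_map, List.mem_range] at hy
      obtain ⟨k, hk, rfl⟩ := hy
      simp [h (a+1+k) (by omega)]

lemma signVar_add_single_le (p : Polynomial ℝ) (c : ℝ) (a : ℕ) :
    signVar (p + C c * X^a) ≤ signVar p + 2 := (signVar_add_single p c a).1

lemma signVar_add_single_eq (p : Polynomial ℝ) (c : ℝ) (a : ℕ)
    (heq : signVar p + 2 ≤ signVar (p + C c * X^a)) :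
    (∃ k, k < a ∧ p.coeff k ≠ 0) ∧ (∃ k, a < k ∧ p.coeff k ≠ 0) := by
  constructor
  · by_contra hcon
    push_neg at hcon
    have := (signVar_add_single p c a).2 (Or.inl fun k hk => hcon k hk)
    omega
  · by_contra hcon
    push_neg at hcon
    have := (signVar_add_single p c a).2 (Or.inr fun k hk => hcon k hk)
    omega

lemma signVar_eq_zero_of (p : Polynomial ℝ) (c : ℝ) (h : ∀ k, p.coeff k = 0 ∨ p.coeff k = c) :
    signVar p = 0 := by
  have h0 : signVar p = vr ((List.range (p.natDegree + 1)).map p.coeff) := rfl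
  rw [h0]
  apply chg_same_sign (s := c)
  intro y hy
  have hyne : y ≠ 0 := by simpa using List.of_mem_filter hy
  have hymem := List.mem_of_mem_filter hy
  simp only [List.mem_map, List.mem_range] at hymem
  obtain ⟨k, _, rfl⟩ := hymem
  rcases h k with h' | h'
  · exact absurd h' hyne
  · rw [h']
    have hc : c ≠ 0 := h' ▸ hyne
    exact mul_self_pos.mpr hc

lemma signVar_single (c : ℝ) (a : ℕ) : signVar (C c * X^a) = 0 := by
  apply signVar_eq_zero_of _ c
  intro k
  rcases eq_or_ne a k with rfl | h
  · right; simp [coeff_C_mul, coeff_X_pow]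
  · left; simp only [coeff_C_mul, coeff_X_pow, if_neg (Ne.symm h), mul_zero]

lemma signVar_X_add_one_mul (q : Polynomial ℝ) : signVar ((X + 1) * q) ≤ signVar q := by
  set n := q.natDegree with hn
  have hd : ((X + 1) * q).natDegree ≤ n + 1 := by
    refine natDegree_mul_le.trans ?_
    have h1 : (X + 1 : Polynomial ℝ).natDegree ≤ 1 := by
      rw [show (X + 1 : Polynomial ℝ) = X + C 1 by rw [map_one]]
      exact le_of_eq (natDegree_X_add_C 1)
    omega
  rw [signVar_eq_vr q (le_refl n), signVar_eq_vr _ hd]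
  have hlist : (List.range (n+1+1)).map ((X + 1) * q).coeff
      = cv 0 ((List.range (n+1)).map q.coeff) := by
    have hlen : ((List.range (n+1+1)).map ((X + 1) * q).coeff).length
        = (cv 0 ((List.range (n+1)).map q.coeff)).length := by
      simp [cv_length]
    apply List.ext_getElem hlen
    intro i h1 h2
    rw [← List.getD_eq_getElem _ 0 h1, ← List.getD_eq_getElem _ 0 h2]
    have hi : i < n + 2 := by simp at h1; omega
    have hgetL : ∀ (f : ℕ → ℝ) (m j : ℕ), j < m →
        ((List.range m).map f).getD j 0 = f j := by
      intro f m j hj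
      rw [List.getD_eq_getElem _ 0 (by simpa using hj)]
      simp
    have hgetD : ∀ j : ℕ, ((List.range (n+1)).map q.coeff).getD j 0 = q.coeff j := by
      intro j
      rcases lt_or_ge j (n+1) with hj | hj
      · exact hgetL q.coeff (n+1) j hj
      · rw [List.getD_eq_default _ 0 (by simpa using hj)]
        exact (q.coeff_eq_zero_of_natDegree_lt (by omega)).symm
    rw [hgetL _ _ _ hi, cv_getD 0 _ i (by simp; omega), hgetD, hgetD]
    rw [show ((X : Polynomial ℝ) + 1) * q = X * q + q by ring, coeff_add]
    cases i with
    | zero => simp [mul_coeff_zero]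
    | succ j => simp [coeff_X_mul]
  rw [hlist]
  exact vr_cv_le (n+2) _ (by simp)

end SV

set_option maxHeartbeats 1000000

namespace SV

lemma signVar_pow_X_add_one_mul (m : ℕ) : ∀ q : Polynomial ℝ,
    signVar ((X + 1) ^ m * q) ≤ signVar q := by
  induction m with
  | zero => intro q; simp
  | succ k ih =>
    intro q
    rw [pow_succ, mul_assoc]
    exact le_trans (ih ((X + 1) * q)) (signVar_X_add_one_mul q)

lemma coeff_term {b : ℝ} {bj g k : ℕ} (h : (C b * X ^ bj * (X + 1) ^ g).coeff k ≠ 0) :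
    bj ≤ k ∧ k ≤ bj + g := by
  have he : C b * X ^ bj * (X + 1) ^ g = (C b * (X + 1) ^ g) * X ^ bj := by ring
  rw [he, coeff_mul_X_pow'] at h
  by_cases hle : bj ≤ k
  · refine ⟨hle, ?_⟩
    rw [if_pos hle, coeff_C_mul, coeff_X_add_one_pow] at h
    have hch : g.choose (k - bj) ≠ 0 := by
      intro h0
      rw [h0] at h
      simp at h
    have : ¬ g < k - bj := fun hlt => hch (Nat.choose_eq_zero_of_lt hlt)
    omega
  · rw [if_neg hle] at h
    exact absurd rfl h

end SV

open SV

theorem stmt4 (t : ℕ) (ht : 0 < t) (b : Fin t → ℝ) (β γ : Fin t → ℕ)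
    (hb : ∀ i, b i ≠ 0) (hdist : Function.Injective fun i => (β i, γ i))
    (hmono : Monotone γ)
    (h : (signVar (∑ i, Polynomial.C (b i) * Polynomial.X ^ β i *
          (Polynomial.X + 1) ^ γ i) : ℤ) = 2 * t - 2) :
    ∀ i : Fin t, (i : ℕ) < t - 1 →
      β ⟨t - 1, by omega⟩ < β i ∧
        β i + γ i < β ⟨t - 1, by omega⟩ + γ ⟨t - 1, by omega⟩ := by
  intro i0 hi0
  have ht2 : 2 ≤ t := by omega
  have hnat : signVar (∑ i, C (b i) * X ^ β i * (X + 1) ^ γ i) = 2 * t - 2 := by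
    revert h
    generalize signVar (∑ i, C (b i) * X ^ β i * (X + 1) ^ γ i) = s
    intro h
    omega
  set Pp : Fin t → Polynomial ℝ :=
    fun i => ∑ j ∈ Finset.Ici i, C (b j) * X ^ β j * (X + 1) ^ (γ j - γ i) with hPp
  set Gg : Fin t → Polynomial ℝ :=
    fun i => ∑ j ∈ Finset.Ioi i, C (b j) * X ^ β j * (X + 1) ^ (γ j - γ i) with hGg
  -- (A)
  have hA : ∀ i : Fin t, Pp i = Gg i + C (b i) * X ^ β i := by
    intro i
    simp only [hPp, hGg]
    rw [← Finset.Ioi_insert i, Finset.sum_insert (by simp)]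
    simp [add_comm]
  -- (B)
  have hB : ∀ (i : Fin t) (hi : (i : ℕ) + 1 < t),
      Gg i = (X + 1) ^ (γ ⟨i + 1, hi⟩ - γ i) * Pp ⟨i + 1, hi⟩ := by
    intro i hi
    simp only [hPp, hGg]
    rw [Finset.mul_sum]
    have hIoi : Finset.Ioi i = Finset.Ici (⟨i + 1, hi⟩ : Fin t) := by
      ext j
      simp only [Finset.mem_Ioi, Finset.mem_Ici, Fin.le_def, Fin.lt_def]
      omega
    rw [hIoi]
    apply Finset.sum_congr rfl
    intro j hj
    have h1 : γ i ≤ γ (⟨i + 1, hi⟩ : Fin t) := hmono (by simp [Fin.le_def])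
    have h2 : γ (⟨i + 1, hi⟩ : Fin t) ≤ γ j := hmono (Finset.mem_Ici.1 hj)
    rw [show γ j - γ i = (γ j - γ ⟨i + 1, hi⟩) + (γ ⟨i + 1, hi⟩ - γ i) by omega, pow_add]
    ring
  -- (C)
  have hC : (∑ i, C (b i) * X ^ β i * (X + 1) ^ γ i)
      = (X + 1) ^ (γ ⟨0, ht⟩) * Pp ⟨0, ht⟩ := by
    simp only [hPp]
    rw [Finset.mul_sum]
    have hIci : Finset.Ici (⟨0, ht⟩ : Fin t) = Finset.univ := by
      ext j
      simp [Fin.le_def]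
    rw [hIci]
    apply Finset.sum_congr rfl
    intro j _
    have h1 : γ (⟨0, ht⟩ : Fin t) ≤ γ j := hmono (by simp [Fin.le_def])
    rw [show (X + 1 : Polynomial ℝ) ^ γ j = (X + 1) ^ ((γ j - γ ⟨0, ht⟩) + γ ⟨0, ht⟩) by
      congr 1; omega, pow_add]
    ring
  -- (D)
  have hD : signVar (Pp ⟨t - 1, by omega⟩) = 0 := by
    have hIci : Finset.Ici (⟨t - 1, by omega⟩ : Fin t) = {⟨t - 1, by omega⟩} := by
      ext j
      simp only [Finset.mem_Ici, Finset.mem_singleton, Fin.le_def, Fin.ext_iff]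
      have := j.isLt
      omega
    simp only [hPp]
    rw [hIci]
    simp only [Finset.sum_singleton, Nat.sub_self, pow_zero, mul_one]
    exact signVar_single _ _
  -- step inequality (Fin form)
  have hstep : ∀ (i : Fin t) (hi : (i : ℕ) + 1 < t),
      signVar (Pp i) ≤ signVar (Pp ⟨i + 1, hi⟩) + 2 ∧
      signVar (Gg i) ≤ signVar (Pp ⟨i + 1, hi⟩) := by
    intro i hi
    have h1 : signVar (Gg i) ≤ signVar (Pp ⟨i + 1, hi⟩) := by
      rw [hB i hi]
      exact signVar_pow_X_add_one_mul _ _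
    refine ⟨?_, h1⟩
    calc signVar (Pp i) = signVar (Gg i + C (b i) * X ^ β i) := by rw [hA i]
    _ ≤ signVar (Gg i) + 2 := signVar_add_single_le _ _ _
    _ ≤ signVar (Pp ⟨i + 1, hi⟩) + 2 := by omega
  -- natural-number indexed values
  set vv : ℕ → ℕ := fun m => if hm : m < t then signVar (Pp ⟨m, hm⟩) else 0 with hvv
  have hv : ∀ i : Fin t, vv (i : ℕ) = signVar (Pp i) := by
    intro i
    simp only [hvv]
    rw [dif_pos i.isLt]
  have hstepv : ∀ m : ℕ, m + 1 < t → vv m ≤ vv (m + 1) + 2 := by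
    intro m hm
    have hm' : m < t := by omega
    have e1 : vv m = signVar (Pp ⟨m, hm'⟩) := hv ⟨m, hm'⟩
    have e2 : vv (m + 1) = signVar (Pp ⟨m + 1, hm⟩) := hv ⟨m + 1, hm⟩
    rw [e1, e2]
    exact (hstep ⟨m, hm'⟩ hm).1
  have hlast : vv (t - 1) = 0 := by
    have e1 : vv (t - 1) = signVar (Pp ⟨t - 1, by omega⟩) := hv ⟨t - 1, by omega⟩
    rw [e1, hD]
  -- upper bound going down
  have hupper : ∀ m k : ℕ, k = t - 1 - m → vv k ≤ 2 * m := by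
    intro m
    induction m with
    | zero =>
      intro k hk
      have : k = t - 1 := by omega
      rw [this, hlast]
    | succ m ih =>
      intro k hk
      by_cases hc : k = t - 1 - m
      · exact (ih k hc).trans (by omega)
      · have h1 : k + 1 < t := by omega
        have h2 : k + 1 = t - 1 - m := by omega
        have := hstepv k h1
        have := ih (k + 1) h2
        omega
  -- chain from 0
  have hchain : ∀ m : ℕ, m < t → vv 0 ≤ vv m + 2 * m := by
    intro m
    induction m with
    | zero => intro _; omega
    | succ m ih =>
      intro hm
      have := hstepv m hm
      have := ih (by omega)
      omega
  -- lower bound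
  have hlow0 : 2 * t - 2 ≤ vv 0 := by
    have e1 : vv 0 = signVar (Pp ⟨0, ht⟩) := hv ⟨0, ht⟩
    rw [e1, ← hnat, hC]
    exact signVar_pow_X_add_one_mul _ _
  -- exact values
  have hval : ∀ m : ℕ, m < t → vv m = 2 * (t - 1 - m) := by
    intro m hm
    have h1 := hchain m hm
    have h2 := hupper (t - 1 - m) m (by omega)
    have h3 := hupper 0 (t - 1) (by omega)
    have h4 := hchain (t - 1) (by omega)
    omega
  -- equality extraction for each i < t-1
  have hext : ∀ (i : Fin t), (i : ℕ) < t - 1 →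
      (∃ j : Fin t, i < j ∧ β j < β i) ∧
      (∃ j : Fin t, i < j ∧ β i + γ i < β j + γ j) := by
    intro i hi
    have h1 : (i : ℕ) + 1 < t := by omega
    have q1 : signVar (Pp i) = vv (i : ℕ) := (hv i).symm
    have q2 : vv (i : ℕ) = 2 * (t - 1 - (i : ℕ)) := hval _ (by omega)
    have q3 : vv ((i : ℕ) + 1) = 2 * (t - 1 - ((i : ℕ) + 1)) := hval _ h1
    have q4 : signVar (Gg i) ≤ vv ((i : ℕ) + 1) :=
      le_trans (hstep i h1).2 (le_of_eq (hv ⟨(i : ℕ) + 1, h1⟩).symm)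
    have q5 : signVar (Gg i + C (b i) * X ^ β i) = signVar (Pp i) := by rw [← hA]
    have heq : signVar (Gg i) + 2 ≤ signVar (Gg i + C (b i) * X ^ β i) := by omega
    obtain ⟨⟨k, hk, hk0⟩, ⟨l, hl, hl0⟩⟩ := signVar_add_single_eq (Gg i) (b i) (β i) heq
    constructor
    · rw [hGg] at hk0
      simp only [finset_sum_coeff] at hk0
      obtain ⟨j, hj, hj0⟩ := Finset.exists_ne_zero_of_sum_ne_zero hk0
      have := (coeff_term hj0).1
      exact ⟨j, Finset.mem_Ioi.1 hj, by omega⟩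
    · rw [hGg] at hl0
      simp only [finset_sum_coeff] at hl0
      obtain ⟨j, hj, hj0⟩ := Finset.exists_ne_zero_of_sum_ne_zero hl0
      have hj1 := (coeff_term hj0).2
      have hj2 : γ i ≤ γ j := hmono (le_of_lt (Finset.mem_Ioi.1 hj))
      exact ⟨j, Finset.mem_Ioi.1 hj, by omega⟩
  -- final downward induction
  have hfinal : ∀ d : ℕ, ∀ (i : Fin t), (i : ℕ) < t - 1 → t - 1 - (i : ℕ) ≤ d →
      β ⟨t - 1, by omega⟩ < β i ∧
        β i + γ i < β ⟨t - 1, by omega⟩ + γ ⟨t - 1, by omega⟩ := by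
    intro d
    induction d with
    | zero => intro i hi hd; omega
    | succ d ih =>
      intro i hi hd
      obtain ⟨⟨j1, hij1, hj1⟩, ⟨j2, hij2, hj2⟩⟩ := hext i hi
      have hij1' : (i : ℕ) < (j1 : ℕ) := hij1
      have hij2' : (i : ℕ) < (j2 : ℕ) := hij2
      have hjlt1 := j1.isLt
      have hjlt2 := j2.isLt
      constructor
      · rcases eq_or_lt_of_le (show (j1 : ℕ) ≤ t - 1 by omega) with hj | hj
        · have hje : j1 = ⟨t - 1, by omega⟩ := Fin.ext (by exact hj)
          rw [← hje]
          exact hj1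
        · have := (ih j1 (by omega) (by omega)).1
          omega
      · rcases eq_or_lt_of_le (show (j2 : ℕ) ≤ t - 1 by omega) with hj | hj
        · have hje : j2 = ⟨t - 1, by omega⟩ := Fin.ext (by exact hj)
          rw [← hje]
          exact hj2
        · have := (ih j2 (by omega) (by omega)).2
          omega
  exact hfinal (t - 1 - (i0 : ℕ)) i0 hi0 le_rfl
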